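/- (Main Theorem, reciprocity) For every isthmus-free edge set E ⊆ (V choose 2): Σ_{H ∈ P_V, H ⊆ E} μ(H,E) · α^{|E|−|H|} · [Γ^A]_H = (−1)^{|E|} · Σ_{H ∈ P_V, H ⊆ E} μ(H,E) · ᾱ^{|E|−|H|} · [Γ^{Ā}]_H. -/

import Mathlib

open scoped Classical

noncomputable section

/-- Number of connected components of the graph on `V` with edge set `E`. -/
def cComp (V : Type) [Fintype V] (E : Finset (Sym2 V)) : ℕ :=
  Nat.card (SimpleGraph.fromEdgeSet (E : Set (Sym2 V))).ConnectedComponent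

/-- `E` is isthmus-free: it contains no edge whose removal increases the number
of connected components. -/
def IsthmusFree (V : Type) [Fintype V] (E : Finset (Sym2 V)) : Prop :=
  ∀ t ∈ E, ¬ cComp V (E.erase t) > cComp V E

/-- Möbius function of the poset `P_V` of isthmus-free edge sets on `V`,
ordered by inclusion: `μ(K,K) = 1` and `∑_{L ∈ P_V, K ⊆ L ⊆ H} μ(K,L) = 0` for `K ⊊ H`. -/
def muPV (V : Type) [Fintype V] (K H : Finset (Sym2 V)) : ℤ :=
  if K = H then 1
  else - ∑ L ∈ ((H.powerset.filter (fun L => K ⊆ L ∧ L ≠ H ∧ IsthmusFree V L)).attach),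
      muPV V K L.1
termination_by H.card
decreasing_by
  have hL := L.2
  simp only [Finset.mem_filter, Finset.mem_powerset] at hL
  exact Finset.card_lt_card (lt_of_le_of_ne hL.1 hL.2.2.1)

/-- `[Γ^A]_E`: the probability that a uniformly random coloring `X : V → F` has all
differences along edges of `E` inside `A`. -/
def Gamma (V : Type) [Fintype V] (F : Type) [Fintype F] [AddCommGroup F]
    (A : Finset F) (E : Finset (Sym2 V)) : ℝ :=
  (Nat.card {X : V → F //
      ∀ e ∈ E, ∀ u w : V, e = s(u, w) → X u - X w ∈ A} : ℝ) /
    (Fintype.card F : ℝ) ^ (Fintype.card V)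

end

/-! ### Auxiliary development -/

noncomputable section Aux

open SimpleGraph

set_option linter.unusedSectionVars false
set_option linter.unusedVariables false

variable {V : Type} [Fintype V] {F : Type} [Fintype F] [AddCommGroup F]

/-! #### Graph lemmas -/

lemma reachable_of_adj_imp {G G' : SimpleGraph V}
    (h : ∀ a b : V, G.Adj a b → G'.Reachable a b) {a b : V} (hr : G.Reachable a b) :
    G'.Reachable a b := by
  obtain ⟨p⟩ := hr
  induction p with
  | nil => exact Reachable.refl _
  | cons ha _ ih => exact (h _ _ ha).trans ih

lemma cComp_eq_of_reachable (J : Finset (Sym2 V)) (t : Sym2 V) (u w : V)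
    (ht : t ∈ J) (htuw : t = s(u, w))
    (hr : (fromEdgeSet ((J.erase t : Finset (Sym2 V)) : Set (Sym2 V))).Reachable u w) :
    cComp V (J.erase t) = cComp V J := by
  set G : SimpleGraph V := fromEdgeSet (J : Set (Sym2 V))
  set G' : SimpleGraph V := fromEdgeSet ((J.erase t : Finset (Sym2 V)) : Set (Sym2 V))
  have hle : G' ≤ G :=
    fromEdgeSet_mono (by exact_mod_cast Finset.coe_subset.2 (Finset.erase_subset _ _))
  have himp : ∀ a b : V, G.Adj a b → G'.Reachable a b := by
    intro a b hab
    rw [fromEdgeSet_adj] at hab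
    by_cases hst : s(a, b) = t
    · rw [htuw, Sym2.eq_iff] at hst
      rcases hst with ⟨rfl, rfl⟩ | ⟨rfl, rfl⟩
      · exact hr
      · exact hr.symm
    · exact Adj.reachable
        (by rw [fromEdgeSet_adj]
            exact ⟨by simpa [Finset.mem_erase, hst] using hab.1, hab.2⟩)
  let f : G'.ConnectedComponent → G.ConnectedComponent :=
    Quot.map id (fun a b h => h.mono hle)
  let g : G.ConnectedComponent → G'.ConnectedComponent :=
    Quot.map id (fun a b h => reachable_of_adj_imp himp h)
  refine Nat.card_congr ⟨f, g, ?_, ?_⟩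
  · intro c; induction c using SimpleGraph.ConnectedComponent.ind with
    | h v => rfl
  · intro c; induction c using SimpleGraph.ConnectedComponent.ind with
    | h v => rfl

lemma cComp_lt_of_not_reachable (J : Finset (Sym2 V)) (t : Sym2 V) (u w : V)
    (ht : t ∈ J) (htuw : t = s(u, w)) (huw : u ≠ w)
    (hr : ¬ (fromEdgeSet ((J.erase t : Finset (Sym2 V)) : Set (Sym2 V))).Reachable u w) :
    cComp V J < cComp V (J.erase t) := by
  set G : SimpleGraph V := fromEdgeSet (J : Set (Sym2 V))
  set G' : SimpleGraph V := fromEdgeSet ((J.erase t : Finset (Sym2 V)) : Set (Sym2 V))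
  have hle : G' ≤ G :=
    fromEdgeSet_mono (by exact_mod_cast Finset.coe_subset.2 (Finset.erase_subset _ _))
  let f : G'.ConnectedComponent → G.ConnectedComponent :=
    Quot.map id (fun a b h => h.mono hle)
  have hsurj : Function.Surjective f := by
    intro c; induction c using SimpleGraph.ConnectedComponent.ind with
    | h v => exact ⟨G'.connectedComponentMk v, rfl⟩
  have hninj : ¬ Function.Injective f := by
    intro hinj
    have hadj : G.Adj u w := by rw [fromEdgeSet_adj]; exact ⟨htuw ▸ ht, huw⟩
    have : f (G'.connectedComponentMk u) = f (G'.connectedComponentMk w) :=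
      ConnectedComponent.connectedComponentMk_eq_of_adj hadj
    exact hr (ConnectedComponent.exact (hinj this))
  haveI : Fintype G.ConnectedComponent := Fintype.ofFinite _
  haveI : Fintype G'.ConnectedComponent := Fintype.ofFinite _
  show Nat.card _ < Nat.card _
  rw [Nat.card_eq_fintype_card, Nat.card_eq_fintype_card]
  exact Fintype.card_lt_of_surjective_not_injective f hsurj hninj

/-! #### Counting lemmas -/

def Npred (F : Type) [AddCommGroup F] (B : Finset F) (J : Finset (Sym2 V)) (X : V → F) : Prop :=
  ∀ e ∈ J, ∀ u w : V, e = s(u, w) → X u - X w ∈ B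

def Ncard (V : Type) [Fintype V] (F : Type) [Fintype F] [AddCommGroup F]
    (B : Finset F) (J : Finset (Sym2 V)) : ℕ :=
  (Finset.univ.filter (Npred F B J)).card

lemma bridge_count (B : Finset F) (hB : ∀ a ∈ B, -a ∈ B) (J : Finset (Sym2 V))
    (t : Sym2 V) (u w : V) (ht : t ∈ J) (htuw : t = s(u, w)) (huw : u ≠ w)
    (hr : ¬ (fromEdgeSet ((J.erase t : Finset (Sym2 V)) : Set (Sym2 V))).Reachable u w) :
    Fintype.card F * Ncard V F B J = B.card * Ncard V F B (J.erase t) := by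
  set J' := J.erase t with hJ'
  set G' : SimpleGraph V := fromEdgeSet ((J' : Finset (Sym2 V)) : Set (Sym2 V)) with hG'
  set C : Finset V := Finset.univ.filter (fun x => G'.Reachable u x) with hC
  have huC : u ∈ C := by
    simp only [hC, Finset.mem_filter, Finset.mem_univ, true_and]; exact Reachable.refl u
  have hwC : w ∉ C := by simp [hC]; exact hr
  have hedge : ∀ e ∈ J', ∀ a b : V, e = s(a, b) → (a ∈ C ↔ b ∈ C) := by
    intro e he a b hab
    by_cases hab' : a = b
    · subst hab'; rfl
    · have hadj : G'.Adj a b := by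
        rw [hG', fromEdgeSet_adj]; exact ⟨by rwa [← hab], hab'⟩
      simp only [hC, Finset.mem_filter, Finset.mem_univ, true_and]
      exact ⟨fun h => h.trans hadj.reachable, fun h => h.trans hadj.symm.reachable⟩
  have hstepA : ∀ X : V → F, Npred F B J X ↔ (Npred F B J' X ∧ X u - X w ∈ B) := by
    intro X
    constructor
    · intro h
      exact ⟨fun e he => h e (Finset.erase_subset _ _ he), h t ht u w htuw⟩
    · rintro ⟨h1, h2⟩ e he a b hab
      by_cases het : e = t
      · subst het
        rw [htuw] at hab
        rcases Sym2.eq_iff.1 hab.symm with ⟨rfl, rfl⟩ | ⟨rfl, rfl⟩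
        · exact h2
        · have := hB _ h2; rwa [neg_sub] at this
      · exact h1 e (Finset.mem_erase.2 ⟨het, he⟩) a b hab
  set M : F → ℕ := fun c =>
    (Finset.univ.filter (fun X : V → F => Npred F B J' X ∧ X u - X w = c)).card with hM
  have claim1 : Ncard V F B J = ∑ c ∈ B, M c := by
    rw [Ncard, Finset.card_eq_sum_card_fiberwise
      (f := fun X : V → F => X u - X w) (t := B)
      (fun X hX => ((hstepA X).1 (Finset.mem_filter.1 hX).2).2)]
    refine Finset.sum_congr rfl fun c hc => ?_
    rw [Finset.filter_filter]
    congr 1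
    apply Finset.filter_congr
    intro X _
    constructor
    · rintro ⟨h1, h2⟩; exact ⟨((hstepA X).1 h1).1, h2⟩
    · rintro ⟨h1, h2⟩; exact ⟨(hstepA X).2 ⟨h1, h2 ▸ hc⟩, h2⟩
  have claim2 : Ncard V F B J' = ∑ c ∈ (Finset.univ : Finset F), M c := by
    rw [Ncard, Finset.card_eq_sum_card_fiberwise
      (f := fun X : V → F => X u - X w) (t := Finset.univ)
      (fun X _ => Finset.mem_univ _)]
    refine Finset.sum_congr rfl fun c _ => ?_
    rw [Finset.filter_filter]
  have claim3 : ∀ c : F, M c = M 0 := by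
    intro c
    set χ : V → F := fun x => if x ∈ C then c else 0 with hχ
    have hχe : ∀ e ∈ J', ∀ a b : V, e = s(a, b) → χ a = χ b := by
      intro e he a b hab
      by_cases h : a ∈ C
      · rw [hχ]; simp only [h, if_true, (hedge e he a b hab).1 h]
      · have hb : b ∉ C := fun hb => h ((hedge e he a b hab).2 hb)
        rw [hχ]; simp only [h, hb, if_false]
    have hcu : χ u = c := by rw [hχ]; simp [huC]
    have hw0 : χ w = 0 := by rw [hχ]; simp [hwC]
    apply Finset.card_bij' (fun X _ => X - χ) (fun Y _ => Y + χ)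
    · intro X hX
      simp only [Finset.mem_filter, Finset.mem_univ, true_and] at hX ⊢
      refine ⟨fun e he a b hab => ?_, ?_⟩
      · have h1 : (X - χ) a - (X - χ) b = X a - X b := by
          simp only [Pi.sub_apply, hχe e he a b hab]; abel
        rw [h1]; exact hX.1 e he a b hab
      · simp only [Pi.sub_apply, hcu, hw0, sub_zero]
        rw [sub_right_comm, hX.2, sub_self]
    · intro Y hY
      simp only [Finset.mem_filter, Finset.mem_univ, true_and] at hY ⊢
      refine ⟨fun e he a b hab => ?_, ?_⟩
      · have h1 : (Y + χ) a - (Y + χ) b = Y a - Y b := by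
          simp only [Pi.add_apply, hχe e he a b hab]; abel
        rw [h1]; exact hY.1 e he a b hab
      · simp only [Pi.add_apply, hcu, hw0, add_zero]
        have h2 : Y u + c - Y w = (Y u - Y w) + c := by abel
        rw [h2, hY.2, zero_add]
    · intro X _; simp
    · intro Y _; simp
  have hB0 : ∑ c ∈ B, M c = B.card * M 0 := by
    rw [Finset.sum_congr rfl (fun c _ => claim3 c), Finset.sum_const, smul_eq_mul]
  have hU0 : ∑ c ∈ (Finset.univ : Finset F), M c = Fintype.card F * M 0 := by
    rw [Finset.sum_congr rfl (fun c _ => claim3 c), Finset.sum_const, smul_eq_mul,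
      Finset.card_univ]
  rw [claim1, claim2, hB0, hU0]
  ring

lemma Gamma_eq (B : Finset F) (J : Finset (Sym2 V)) :
    Gamma V F B J = (Ncard V F B J : ℝ) / (Fintype.card F : ℝ) ^ (Fintype.card V) := by
  have h : Nat.card {X : V → F //
      ∀ e ∈ J, ∀ u w : V, e = s(u, w) → X u - X w ∈ B} = Ncard V F B J := by
    rw [Ncard, Nat.card_eq_fintype_card,
      Fintype.card_subtype (p := fun X : V → F => ∀ e ∈ J, ∀ u w : V, e = s(u, w) → X u - X w ∈ B)]
    unfold Npred
    convert rfl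
  rw [Gamma, h]

lemma Gamma_bridge (B : Finset F) (hB : ∀ a ∈ B, -a ∈ B) (J : Finset (Sym2 V))
    (t : Sym2 V) (u w : V) (ht : t ∈ J) (htuw : t = s(u, w)) (huw : u ≠ w)
    (hr : ¬ (fromEdgeSet ((J.erase t : Finset (Sym2 V)) : Set (Sym2 V))).Reachable u w) :
    Gamma V F B J = ((B.card : ℝ) / (Fintype.card F : ℝ)) * Gamma V F B (J.erase t) := by
  have hcast : (Fintype.card F : ℝ) * (Ncard V F B J : ℝ)
      = (B.card : ℝ) * (Ncard V F B (J.erase t) : ℝ) := by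
    exact_mod_cast congrArg (Nat.cast : ℕ → ℝ) (bridge_count B hB J t u w ht htuw huw hr)
  have hf : (Fintype.card F : ℝ) ≠ 0 := Nat.cast_ne_zero.2 Fintype.card_ne_zero
  have hfv : ((Fintype.card F : ℝ)) ^ (Fintype.card V) ≠ 0 := pow_ne_zero _ hf
  rw [Gamma_eq, Gamma_eq]
  rw [div_mul_div_comm, div_eq_div_iff hfv (mul_ne_zero hf hfv)]
  calc (Ncard V F B J : ℝ) * ((Fintype.card F : ℝ) * (Fintype.card F : ℝ) ^ (Fintype.card V))
      = ((Fintype.card F : ℝ) * (Ncard V F B J : ℝ)) * (Fintype.card F : ℝ) ^ (Fintype.card V) := by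
        ring
    _ = (B.card : ℝ) * (Ncard V F B (J.erase t) : ℝ) * (Fintype.card F : ℝ) ^ (Fintype.card V) := by
        rw [hcast]

/-! #### Inclusion-exclusion -/

def ind (B : Finset F) (X : V → F) (e : Sym2 V) : ℝ :=
  if (∀ u w : V, e = s(u, w) → X u - X w ∈ B) then 1 else 0

lemma Gamma_sum_prod (B : Finset F) (J : Finset (Sym2 V)) :
    Gamma V F B J
      = (∑ X : V → F, ∏ e ∈ J, ind B X e) / (Fintype.card F : ℝ) ^ (Fintype.card V) := by
  rw [Gamma_eq, Ncard]
  congr 1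
  rw [← Finset.sum_boole (Npred F B J) Finset.univ]
  refine Finset.sum_congr rfl fun X _ => ?_
  simp only [ind]
  rw [Finset.prod_boole]
  unfold Npred
  by_cases h : ∀ e ∈ J, ∀ u w : V, e = s(u, w) → X u - X w ∈ B <;> simp [h]

lemma cond_iff (B : Finset F) (hB : ∀ a ∈ B, -a ∈ B) (X : V → F) (a b : V) :
    (∀ u w : V, s(a, b) = s(u, w) → X u - X w ∈ B) ↔ X a - X b ∈ B := by
  constructor
  · intro h; exact h a b rfl
  · intro h u w heq
    rcases Sym2.eq_iff.1 heq with ⟨rfl, rfl⟩ | ⟨rfl, rfl⟩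
    · exact h
    · have := hB _ h; rwa [neg_sub] at this

lemma compl_symm (A : Finset F) (hA : ∀ a ∈ A, -a ∈ A) : ∀ a ∈ Aᶜ, -a ∈ Aᶜ := by
  intro x hx
  simp only [Finset.mem_compl] at hx ⊢
  intro hc; exact hx (by simpa using hA _ hc)

lemma ind_compl (A : Finset F) (hA : ∀ a ∈ A, -a ∈ A) (X : V → F) (e : Sym2 V)
    (he : ¬ e.IsDiag) : ind A X e = 1 - ind Aᶜ X e := by
  induction e with
  | _ a b =>
    rw [ind, ind, if_congr (cond_iff A hA X a b) rfl rfl,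
      if_congr (cond_iff Aᶜ (compl_symm A hA) X a b) rfl rfl]
    by_cases h : X a - X b ∈ A <;> simp [h]

lemma IE (A : Finset F) (hA : ∀ a ∈ A, -a ∈ A) (J : Finset (Sym2 V))
    (hJ : ∀ e ∈ J, ¬ e.IsDiag) :
    Gamma V F A J = ∑ H ∈ J.powerset, (-1 : ℝ) ^ H.card * Gamma V F Aᶜ H := by
  rw [Gamma_sum_prod]
  have key : ∀ X : V → F, ∏ e ∈ J, ind A X e
      = ∑ H ∈ J.powerset, (-1 : ℝ) ^ H.card * ∏ e ∈ H, ind Aᶜ X e := by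
    intro X
    have h1 : ∏ e ∈ J, ind A X e = ∏ e ∈ J, ((-(ind Aᶜ X e)) + 1) := by
      refine Finset.prod_congr rfl fun e he => ?_
      rw [ind_compl A hA X e (hJ e he)]; ring
    rw [h1, Finset.prod_add]
    refine Finset.sum_congr rfl fun H hH => ?_
    rw [Finset.prod_const_one, mul_one]
    calc ∏ e ∈ H, -(ind Aᶜ X e) = ∏ e ∈ H, ((-1 : ℝ) * ind Aᶜ X e) := by
          simp only [neg_one_mul]
      _ = (-1 : ℝ) ^ H.card * ∏ e ∈ H, ind Aᶜ X e := by
          rw [Finset.prod_mul_distrib, Finset.prod_const]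
  rw [Finset.sum_congr rfl fun X _ => key X, Finset.sum_comm, Finset.sum_div]
  refine Finset.sum_congr rfl fun H _ => ?_
  rw [← Finset.mul_sum, Gamma_sum_prod, mul_div_assoc]

/-! #### Möbius lemmas -/

lemma muPV_self (K : Finset (Sym2 V)) : muPV V K K = 1 := by
  rw [muPV, if_pos rfl]

lemma muPV_ne (K H : Finset (Sym2 V)) (h : K ≠ H) :
    muPV V K H =
      - ∑ L ∈ H.powerset.filter (fun L => K ⊆ L ∧ L ≠ H ∧ IsthmusFree V L), muPV V K L := by
  rw [muPV, if_neg h, Finset.sum_attach]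

lemma mob (E : Finset (Sym2 V)) (hE : IsthmusFree V E) (K : Finset (Sym2 V)) :
    ∑ H ∈ E.powerset.filter (fun H => K ⊆ H ∧ IsthmusFree V H), muPV V K H
      = if K = E ∧ K ⊆ E then 1 else 0 := by
  by_cases hKE : K = E
  · subst hKE
    rw [if_pos ⟨rfl, Finset.Subset.refl _⟩]
    have hset : K.powerset.filter (fun H => K ⊆ H ∧ IsthmusFree V H) = {K} := by
      ext H
      simp only [Finset.mem_filter, Finset.mem_powerset, Finset.mem_singleton]
      constructor
      · rintro ⟨h1, h2, _⟩; exact Finset.Subset.antisymm h1 h2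
      · rintro rfl; exact ⟨Finset.Subset.refl _, Finset.Subset.refl _, hE⟩
    rw [hset, Finset.sum_singleton, muPV_self]
  · rw [if_neg (by tauto)]
    by_cases hK : K ⊆ E
    · have hsplit : E.powerset.filter (fun H => K ⊆ H ∧ IsthmusFree V H)
          = insert E (E.powerset.filter (fun L => K ⊆ L ∧ L ≠ E ∧ IsthmusFree V L)) := by
        ext H
        simp only [Finset.mem_insert, Finset.mem_filter, Finset.mem_powerset]
        constructor
        · rintro ⟨h1, h2, h3⟩
          by_cases hHE : H = E
          · exact Or.inl hHE
          · exact Or.inr ⟨h1, h2, hHE, h3⟩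
        · rintro (rfl | ⟨h1, h2, _, h3⟩)
          · exact ⟨Finset.Subset.refl _, hK, hE⟩
          · exact ⟨h1, h2, h3⟩
      rw [hsplit, Finset.sum_insert (by simp), muPV_ne K E hKE, neg_add_cancel]
    · have hempty : E.powerset.filter (fun H => K ⊆ H ∧ IsthmusFree V H) = ∅ := by
        apply Finset.filter_false_of_mem
        intro H hH
        rw [Finset.mem_powerset] at hH
        exact fun hc => hK (hc.1.trans hH)
      rw [hempty, Finset.sum_empty]

/-- `Psi B K = ∑_{L ∈ P, L ⊆ K} μ(L,K) β^{|K|-|L|} Γ^B_L` with `β = |B|/f`. -/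
def Psi (V : Type) [Fintype V] (F : Type) [Fintype F] [AddCommGroup F]
    (B : Finset F) (K : Finset (Sym2 V)) : ℝ :=
  ∑ L ∈ K.powerset.filter (IsthmusFree V),
    (muPV V L K : ℝ) * ((B.card : ℝ) / (Fintype.card F : ℝ)) ^ (K.card - L.card) *
      Gamma V F B L

/-- Möbius inversion: `∑_{K ∈ P, K ⊆ E} β^{|E|-|K|} Psi B K = Γ^B_E` for isthmus-free `E`. -/
lemma inv_sum (B : Finset F) (E : Finset (Sym2 V)) (hE : IsthmusFree V E) :
    ∑ K ∈ E.powerset.filter (IsthmusFree V),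
      ((B.card : ℝ) / (Fintype.card F : ℝ)) ^ (E.card - K.card) * Psi V F B K
      = Gamma V F B E := by
  set β : ℝ := (B.card : ℝ) / (Fintype.card F : ℝ) with hβ
  have step1 : ∑ K ∈ E.powerset.filter (IsthmusFree V),
      β ^ (E.card - K.card) * Psi V F B K
      = ∑ K ∈ E.powerset.filter (IsthmusFree V),
          ∑ L ∈ K.powerset.filter (IsthmusFree V),
            (muPV V L K : ℝ) * β ^ (E.card - L.card) * Gamma V F B L := by
    refine Finset.sum_congr rfl fun K hK => ?_
    rw [Psi, Finset.mul_sum]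
    refine Finset.sum_congr rfl fun L hL => ?_
    simp only [Finset.mem_filter, Finset.mem_powerset] at hK hL
    have h1 := Finset.card_le_card hK.1
    have h2 := Finset.card_le_card hL.1
    have hpow : β ^ (E.card - K.card) * β ^ (K.card - L.card) = β ^ (E.card - L.card) := by
      rw [← pow_add]; congr 1; omega
    calc β ^ (E.card - K.card) * ((muPV V L K : ℝ) * β ^ (K.card - L.card) * Gamma V F B L)
        = (muPV V L K : ℝ) * (β ^ (E.card - K.card) * β ^ (K.card - L.card)) * Gamma V F B L := by
          ring
      _ = (muPV V L K : ℝ) * β ^ (E.card - L.card) * Gamma V F B L := by rw [hpow]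
  rw [step1]
  rw [Finset.sum_comm'
    (t' := E.powerset.filter (IsthmusFree V))
    (s' := fun L => E.powerset.filter (fun K => L ⊆ K ∧ IsthmusFree V K))
    (by
      intro K L
      simp only [Finset.mem_filter, Finset.mem_powerset]
      constructor
      · rintro ⟨⟨h1, h2⟩, h3, h4⟩
        exact ⟨⟨h1, h3, h2⟩, h3.trans h1, h4⟩
      · rintro ⟨⟨h1, h2, h3⟩, h4, h5⟩
        exact ⟨⟨h1, h3⟩, h2, h5⟩)]
  have step2 : ∀ L ∈ E.powerset.filter (IsthmusFree V),
      ∑ K ∈ E.powerset.filter (fun K => L ⊆ K ∧ IsthmusFree V K),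
        (muPV V L K : ℝ) * β ^ (E.card - L.card) * Gamma V F B L
      = (if L = E then 1 else 0) * β ^ (E.card - L.card) * Gamma V F B L := by
    intro L hL
    simp only [Finset.mem_filter, Finset.mem_powerset] at hL
    have := mob E hE L
    have hiff : (L = E ∧ L ⊆ E) ↔ (L = E) :=
      ⟨fun h => h.1, fun h => ⟨h, h ▸ Finset.Subset.refl _⟩⟩
    rw [if_congr hiff rfl rfl] at this
    calc ∑ K ∈ E.powerset.filter (fun K => L ⊆ K ∧ IsthmusFree V K),
          (muPV V L K : ℝ) * β ^ (E.card - L.card) * Gamma V F B L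
        = ((∑ K ∈ E.powerset.filter (fun K => L ⊆ K ∧ IsthmusFree V K), (muPV V L K : ℝ)))
            * β ^ (E.card - L.card) * Gamma V F B L := by
          rw [Finset.sum_mul, Finset.sum_mul]
      _ = (if L = E then 1 else 0) * β ^ (E.card - L.card) * Gamma V F B L := by
          congr 1
          congr 1
          exact_mod_cast congrArg (Int.cast : ℤ → ℝ) this
  rw [Finset.sum_congr rfl step2]
  rw [Finset.sum_eq_single_of_mem E
    (by simp [Finset.mem_filter, Finset.mem_powerset, hE])
    (fun b _ hb => by rw [if_neg hb, zero_mul, zero_mul])]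
  rw [if_pos rfl, one_mul, Nat.sub_self, pow_zero, one_mul]

/-- Key induction: expansion of `Γ^B_J` over isthmus-free subsets, for arbitrary `J`. -/
lemma T_expand (B : Finset F) (hB : ∀ a ∈ B, -a ∈ B) :
    ∀ (n : ℕ) (J : Finset (Sym2 V)), J.card ≤ n → (∀ e ∈ J, ¬ e.IsDiag) →
      Gamma V F B J
        = ∑ K ∈ J.powerset.filter (IsthmusFree V),
            ((B.card : ℝ) / (Fintype.card F : ℝ)) ^ (J.card - K.card) * Psi V F B K := by
  intro n
  induction n with
  | zero =>
    intro J hcard hdiag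
    have hJ : J = ∅ := Finset.card_eq_zero.mp (Nat.le_zero.mp hcard)
    subst hJ
    have hfree : IsthmusFree V (∅ : Finset (Sym2 V)) := fun t ht => absurd ht (by simp)
    exact (inv_sum B ∅ hfree).symm
  | succ n ih =>
    intro J hcard hdiag
    by_cases hfree : IsthmusFree V J
    · exact (inv_sum B J hfree).symm
    · rw [IsthmusFree] at hfree
      push_neg at hfree
      obtain ⟨t, ht, hgt⟩ := hfree
      obtain ⟨u, w, rfl⟩ : ∃ u w : V, t = s(u, w) := by
        induction t with
        | _ u w => exact ⟨u, w, rfl⟩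
      have huw : u ≠ w := by
        have := hdiag _ ht
        simpa [Sym2.isDiag_iff_proj_eq] using this
      have hr : ¬ (fromEdgeSet ((J.erase s(u, w) : Finset (Sym2 V)) : Set (Sym2 V))).Reachable u w := by
        intro h
        rw [cComp_eq_of_reachable J s(u, w) u w ht rfl h] at hgt
        exact lt_irrefl _ hgt
      set J' := J.erase s(u, w) with hJ'
      have hJcard : J'.card = J.card - 1 := Finset.card_erase_of_mem ht
      have hJpos : 1 ≤ J.card := Finset.card_pos.2 ⟨_, ht⟩
      have hset : J.powerset.filter (IsthmusFree V) = J'.powerset.filter (IsthmusFree V) := by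
        ext K
        simp only [Finset.mem_filter, Finset.mem_powerset]
        constructor
        · rintro ⟨hKJ, hKfree⟩
          have htK : s(u, w) ∉ K := by
            intro htK
            have hmono : ¬ (fromEdgeSet ((K.erase s(u, w) : Finset (Sym2 V)) : Set (Sym2 V))).Reachable u w := by
              intro h
              exact hr (h.mono (fromEdgeSet_mono
                (by exact_mod_cast Finset.coe_subset.2 (Finset.erase_subset_erase _ hKJ))))
            exact hKfree s(u, w) htK (cComp_lt_of_not_reachable K s(u, w) u w htK rfl huw hmono)
          exact ⟨Finset.subset_erase.2 ⟨hKJ, htK⟩, hKfree⟩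
        · rintro ⟨hKJ, hKfree⟩
          exact ⟨hKJ.trans (Finset.erase_subset _ _), hKfree⟩
      have hGb : Gamma V F B J = ((B.card : ℝ) / (Fintype.card F : ℝ)) * Gamma V F B J' :=
        Gamma_bridge B hB J s(u, w) u w ht rfl huw hr
      have hdiag' : ∀ e ∈ J', ¬ e.IsDiag := fun e he => hdiag e (Finset.erase_subset _ _ he)
      have hcard' : J'.card ≤ n := by omega
      rw [hGb, ih J' hcard' hdiag', hset, Finset.mul_sum]
      refine Finset.sum_congr rfl fun K hK => ?_
      simp only [Finset.mem_filter, Finset.mem_powerset] at hK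
      have hKc := Finset.card_le_card hK.1
      have hpow : ((B.card : ℝ) / (Fintype.card F : ℝ)) ^ (J.card - K.card)
          = ((B.card : ℝ) / (Fintype.card F : ℝ)) * ((B.card : ℝ) / (Fintype.card F : ℝ)) ^ (J'.card - K.card) := by
        rw [← pow_succ']
        congr 1
        omega
      rw [hpow, mul_assoc]

/-- Binomial: `∑_{S ⊆ T} x^{|S|} = (x+1)^{|T|}`. -/
lemma sum_pow_card {γ : Type*} (T : Finset γ) (x : ℝ) :
    ∑ S ∈ T.powerset, x ^ S.card = (x + 1) ^ T.card := by
  calc ∑ S ∈ T.powerset, x ^ S.card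
      = ∑ S ∈ T.powerset, (∏ _i ∈ S, x) * ∏ _i ∈ T \ S, (1 : ℝ) := by
        refine Finset.sum_congr rfl fun S _ => ?_
        rw [Finset.prod_const, Finset.prod_const_one, mul_one]
    _ = ∏ i ∈ T, (x + 1) := (Finset.prod_add _ _ T).symm
    _ = (x + 1) ^ T.card := by rw [Finset.prod_const]

/-- Reindexing: sums over supersets of `K` inside `E`. -/
lemma sum_supersets (E K : Finset (Sym2 V)) (hK : K ⊆ E) (f : ℕ → ℝ) :
    ∑ H ∈ E.powerset.filter (fun H => K ⊆ H), f H.card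
      = ∑ S ∈ (E \ K).powerset, f (S.card + K.card) := by
  refine Finset.sum_nbij' (fun H => H \ K) (fun S => S ∪ K) ?_ ?_ ?_ ?_ ?_
  · intro H hH
    simp only [Finset.mem_filter, Finset.mem_powerset] at hH ⊢
    exact Finset.sdiff_subset_sdiff hH.1 (Finset.Subset.refl _)
  · intro S hS
    simp only [Finset.mem_filter, Finset.mem_powerset] at hS ⊢
    constructor
    · exact Finset.union_subset (hS.trans (Finset.sdiff_subset)) hK
    · exact Finset.subset_union_right
  · intro H hH
    simp only [Finset.mem_filter, Finset.mem_powerset] at hH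
    show H \ K ∪ K = H
    exact Finset.sdiff_union_of_subset hH.2
  · intro S hS
    simp only [Finset.mem_powerset] at hS
    show (S ∪ K) \ K = S
    ext x
    simp only [Finset.mem_sdiff, Finset.mem_union]
    constructor
    · rintro ⟨h1 | h1, h2⟩
      · exact h1
      · exact absurd h1 h2
    · intro hx
      exact ⟨Or.inl hx, fun hk => (Finset.mem_sdiff.1 (hS hx)).2 hk⟩
  · intro H hH
    simp only [Finset.mem_filter, Finset.mem_powerset] at hH
    show f H.card = f ((H \ K).card + K.card)
    congr 1
    have := Finset.card_sdiff_add_card_eq_card hH.2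
    omega

/-- The `(*)` identity: `Γ^A_E = ∑_{K ∈ P, K ⊆ E} (-1)^{|K|} α^{|E|-|K|} Psi Aᶜ K`. -/
lemma star (A : Finset F) (hA : ∀ a ∈ A, -a ∈ A) (E : Finset (Sym2 V))
    (hdiag : ∀ e ∈ E, ¬ e.IsDiag) :
    Gamma V F A E
      = ∑ K ∈ E.powerset.filter (IsthmusFree V),
          (-1 : ℝ) ^ K.card * ((A.card : ℝ) / (Fintype.card F : ℝ)) ^ (E.card - K.card)
            * Psi V F Aᶜ K := by
  have hf : (0 : ℝ) < (Fintype.card F : ℝ) := by exact_mod_cast Fintype.card_pos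
  set α : ℝ := (A.card : ℝ) / (Fintype.card F : ℝ) with hα
  set β : ℝ := ((Aᶜ : Finset F).card : ℝ) / (Fintype.card F : ℝ) with hβ
  have hαβ : β = 1 - α := by
    rw [hβ, hα, eq_sub_iff_add_eq, ← add_div, div_eq_one_iff_eq (ne_of_gt hf)]
    exact_mod_cast (by rw [add_comm]; exact Finset.card_add_card_compl A)
  rw [IE A hA E hdiag]
  have hT : ∀ H ∈ E.powerset, (-1 : ℝ) ^ H.card * Gamma V F Aᶜ H
      = ∑ K ∈ H.powerset.filter (IsthmusFree V),
          (-1 : ℝ) ^ H.card * (β ^ (H.card - K.card) * Psi V F Aᶜ K) := by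
    intro H hH
    rw [Finset.mem_powerset] at hH
    rw [T_expand Aᶜ (compl_symm A hA) H.card H (le_refl _) (fun e he => hdiag e (hH he))]
    rw [Finset.mul_sum]
  rw [Finset.sum_congr rfl hT]
  rw [Finset.sum_comm'
    (t' := E.powerset.filter (IsthmusFree V))
    (s' := fun K => E.powerset.filter (fun H => K ⊆ H))
    (by
      intro H K
      simp only [Finset.mem_filter, Finset.mem_powerset]
      constructor
      · rintro ⟨h1, h2, h3⟩
        exact ⟨⟨h1, h2⟩, h2.trans h1, h3⟩
      · rintro ⟨⟨h1, h2⟩, h3, h4⟩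
        exact ⟨h1, h2, h4⟩)]
  refine Finset.sum_congr rfl fun K hK => ?_
  simp only [Finset.mem_filter, Finset.mem_powerset] at hK
  have hinner : ∑ H ∈ E.powerset.filter (fun H => K ⊆ H),
      (-1 : ℝ) ^ H.card * (β ^ (H.card - K.card) * Psi V F Aᶜ K)
      = (∑ H ∈ E.powerset.filter (fun H => K ⊆ H),
          (-1 : ℝ) ^ H.card * β ^ (H.card - K.card)) * Psi V F Aᶜ K := by
    rw [Finset.sum_mul]
    refine Finset.sum_congr rfl fun H _ => by ring
  rw [hinner]
  congr 1
  have hre : ∑ H ∈ E.powerset.filter (fun H => K ⊆ H), (-1 : ℝ) ^ H.card * β ^ (H.card - K.card)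
      = ∑ S ∈ (E \ K).powerset, (-1 : ℝ) ^ (S.card + K.card) * β ^ ((S.card + K.card) - K.card) :=
    sum_supersets E K hK.1 (fun m => (-1 : ℝ) ^ m * β ^ (m - K.card))
  rw [hre]
  have hre2 : ∀ S ∈ (E \ K).powerset,
      (-1 : ℝ) ^ (S.card + K.card) * β ^ ((S.card + K.card) - K.card)
      = (-1 : ℝ) ^ K.card * (-β) ^ S.card := by
    intro S _
    rw [Nat.add_sub_cancel, pow_add, neg_pow β S.card]
    ring
  rw [Finset.sum_congr rfl hre2, ← Finset.mul_sum, sum_pow_card]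
  have : -β + 1 = α := by rw [hαβ]; ring
  rw [this, Finset.card_sdiff_of_subset hK.1]

/-- Main identity: `Psi A E = (-1)^{|E|} Psi Aᶜ E` for isthmus-free nondegenerate `E`. -/
lemma main_aux (A : Finset F) (hA : ∀ a ∈ A, -a ∈ A) :
    ∀ E : Finset (Sym2 V), (∀ e ∈ E, ¬ e.IsDiag) → IsthmusFree V E →
      Psi V F A E = (-1 : ℝ) ^ E.card * Psi V F Aᶜ E := by
  intro E
  induction E using Finset.strongInduction with
  | _ E ih =>
    intro hdiag hfree
    have h1 : ∑ K ∈ E.powerset.filter (IsthmusFree V),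
        ((A.card : ℝ) / (Fintype.card F : ℝ)) ^ (E.card - K.card) * Psi V F A K
        = Gamma V F A E := inv_sum A E hfree
    have h2 := star A hA E hdiag
    have hEmem : E ∈ E.powerset.filter (IsthmusFree V) := by
      simp [Finset.mem_filter, Finset.mem_powerset, hfree]
    rw [← Finset.add_sum_erase _ _ hEmem] at h1
    rw [← Finset.add_sum_erase _ _ hEmem] at h2
    have hsums : ∑ K ∈ (E.powerset.filter (IsthmusFree V)).erase E,
        ((A.card : ℝ) / (Fintype.card F : ℝ)) ^ (E.card - K.card) * Psi V F A K
        = ∑ K ∈ (E.powerset.filter (IsthmusFree V)).erase E,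
            (-1 : ℝ) ^ K.card * ((A.card : ℝ) / (Fintype.card F : ℝ)) ^ (E.card - K.card)
              * Psi V F Aᶜ K := by
      refine Finset.sum_congr rfl fun K hK => ?_
      simp only [Finset.mem_erase, Finset.mem_filter, Finset.mem_powerset] at hK
      have hKE : K ⊂ E := lt_of_le_of_ne hK.2.1 hK.1
      have := ih K hKE (fun e he => hdiag e (hK.2.1 he)) hK.2.2
      rw [this]; ring
    rw [Nat.sub_self, pow_zero, one_mul] at h1
    rw [Nat.sub_self, pow_zero, mul_one] at h2
    have heq := h1.trans h2
    rw [hsums] at heq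
    exact add_right_cancel heq

end Aux

/-- Main Theorem, reciprocity: for every isthmus-free `E`,
`Σ_{H ∈ P_V, H ⊆ E} μ(H,E) α^{|E|-|H|} [Γ^A]_H
  = (-1)^{|E|} Σ_{H ∈ P_V, H ⊆ E} μ(H,E) ᾱ^{|E|-|H|} [Γ^{Ā}]_H`. -/
theorem reciprocity
    (V : Type) [Fintype V] (F : Type) [Fintype F] [AddCommGroup F]
    (A : Finset F) (hA : ∀ a ∈ A, -a ∈ A)
    (E : Finset (Sym2 V)) (hE : ∀ e ∈ E, ¬ e.IsDiag) (hfree : IsthmusFree V E) :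
    ∑ H ∈ E.powerset.filter (IsthmusFree V),
        (muPV V H E : ℝ) * ((A.card : ℝ) / (Fintype.card F : ℝ)) ^ (E.card - H.card) *
          Gamma V F A H
      = (-1 : ℝ) ^ E.card *
        ∑ H ∈ E.powerset.filter (IsthmusFree V),
          (muPV V H E : ℝ) *
            (1 - (A.card : ℝ) / (Fintype.card F : ℝ)) ^ (E.card - H.card) *
              Gamma V F Aᶜ H := by
  have hf : (0 : ℝ) < (Fintype.card F : ℝ) := by exact_mod_cast Fintype.card_pos
  have hαβ : (1 : ℝ) - (A.card : ℝ) / (Fintype.card F : ℝ)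
      = ((Aᶜ : Finset F).card : ℝ) / (Fintype.card F : ℝ) := by
    rw [sub_eq_iff_eq_add, ← add_div, eq_comm, div_eq_one_iff_eq (ne_of_gt hf)]
    exact_mod_cast (by rw [add_comm]; exact Finset.card_add_card_compl A)
  have hmain := main_aux A hA E hE hfree
  calc ∑ H ∈ E.powerset.filter (IsthmusFree V),
        (muPV V H E : ℝ) * ((A.card : ℝ) / (Fintype.card F : ℝ)) ^ (E.card - H.card) *
          Gamma V F A H
      = Psi V F A E := rfl
    _ = (-1 : ℝ) ^ E.card * Psi V F Aᶜ E := hmain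
    _ = (-1 : ℝ) ^ E.card *
        ∑ H ∈ E.powerset.filter (IsthmusFree V),
          (muPV V H E : ℝ) *
            (1 - (A.card : ℝ) / (Fintype.card F : ℝ)) ^ (E.card - H.card) *
              Gamma V F Aᶜ H := by
        congr 1
        rw [Psi]
        refine Finset.sum_congr rfl fun H _ => ?_
        rw [hαβ]
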